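/- arXiv:2008.09790 — 8 statements merged into one kernel-verified Lean document; each statement's English description precedes it below -/
import Mathlib

section
/- Let $K$ be a stochastic matrix on a finite state space $E = A \cup B$ with invariant probability $\pi_0$ such that $\pi_0(A) > 0$, and suppose $I - K_A$ and $I - K_B$ are invertible. Then the conditional distribution $\pi_{0|A} := \pi_0^A / \pi_0(A)$ satisfies $\pi_{0|A} = \pi_{0|A} K_A + \pi_{0|A} K_{AB} (I - K_B)^{-1} K_{BA}$. -/
open Matrix BigOperators

/-- For a stochastic matrix on `E = A ⊕ B` with invariant probability `π₀` such that
`π₀(A) > 0`, if `I - K_A` and `I - K_B` are invertible, then the conditional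
distribution `π_{0|A}` satisfies
`π_{0|A} = π_{0|A} K_A + π_{0|A} K_{AB} (I - K_B)⁻¹ K_{BA}`. -/
theorem stmt4 {A B : Type*} [Fintype A] [Fintype B] [DecidableEq A] [DecidableEq B]
    [Nonempty A] [Nonempty B]
    (K : Matrix (A ⊕ B) (A ⊕ B) ℝ)
    (hK0 : ∀ i j, 0 ≤ K i j) (hK1 : ∀ i, ∑ j, K i j = 1)
    (π0 : A ⊕ B → ℝ) (hπnn : ∀ i, 0 ≤ π0 i) (hπ1 : ∑ i, π0 i = 1)
    (hstat : π0 ᵥ* K = π0)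
    (hA : 0 < ∑ x : A, π0 (Sum.inl x))
    (KA : Matrix A A ℝ) (hKA : ∀ x y, KA x y = K (Sum.inl x) (Sum.inl y))
    (KAB : Matrix A B ℝ) (hKAB : ∀ x y, KAB x y = K (Sum.inl x) (Sum.inr y))
    (KBA : Matrix B A ℝ) (hKBA : ∀ y x, KBA y x = K (Sum.inr y) (Sum.inl x))
    (KB : Matrix B B ℝ) (hKB : ∀ y z, KB y z = K (Sum.inr y) (Sum.inr z))
    (hUA : IsUnit (1 - KA)) (hUB : IsUnit (1 - KB))
    (πc : A → ℝ) (hπc : πc = (∑ x : A, π0 (Sum.inl x))⁻¹ • fun x => π0 (Sum.inl x)) :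
    πc = πc ᵥ* KA + ((πc ᵥ* KAB) ᵥ* (1 - KB)⁻¹) ᵥ* KBA := by
  set πA : A → ℝ := fun x => π0 (Sum.inl x) with hπA
  set πB : B → ℝ := fun y => π0 (Sum.inr y) with hπB
  have h1 : πA = πA ᵥ* KA + πB ᵥ* KBA := by
    funext x
    have := congrFun hstat (Sum.inl x)
    simp only [Matrix.vecMul, dotProduct, Fintype.sum_sum_type] at this
    simp only [Pi.add_apply, Matrix.vecMul, dotProduct, hπA, hπB, hKA, hKBA]
    linarith [this]
  have h2 : πB ᵥ* (1 - KB) = πA ᵥ* KAB := by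
    funext y
    have := congrFun hstat (Sum.inr y)
    simp only [Matrix.vecMul, dotProduct, Fintype.sum_sum_type] at this
    simp only [Matrix.vecMul, dotProduct, hπA, hπB, hKAB, hKB, Matrix.sub_apply,
      Matrix.one_apply, mul_sub, Finset.sum_sub_distrib, mul_ite, mul_one, mul_zero,
      Finset.sum_ite_eq', Finset.mem_univ, if_true]
    linarith [this]
  have h3 : πB = (πA ᵥ* KAB) ᵥ* (1 - KB)⁻¹ := by
    rw [← h2, Matrix.vecMul_vecMul,
      Matrix.mul_nonsing_inv _ ((Matrix.isUnit_iff_isUnit_det _).mp hUB), Matrix.vecMul_one]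
  rw [hπc, Matrix.smul_vecMul, Matrix.smul_vecMul, Matrix.smul_vecMul, Matrix.smul_vecMul,
    ← smul_add, ← h3, ← h1]
end

section
/- Let $K$ be a stochastic matrix on finite $E = A \cup B$ with blocks $K_A, K_{AB}$, such that $I - K_A$ is invertible. For a probability vector $\pi$ on $A$, define the $\pi$-return kernel $K^\pi = K_A + (K_{AB}\mathbf{1}_B) \otimes \pi$ (a stochastic matrix on $A$). Then the probability vector $R(\pi) := \frac{\pi (I - K_A)^{-1}}{\pi (I - K_A)^{-1} \mathbf{1}_A}$ is stationary for $K^\pi$, i.e., $R(\pi) K^\pi = R(\pi)$. -/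
open Matrix BigOperators

/-- The probability vector `R(π) = π(I-K_A)⁻¹ / π(I-K_A)⁻¹𝟙` is stationary for the
`π`-return kernel `K^π = K_A + (K_{AB}𝟙_B) ⊗ π`. -/
theorem stmt7 {A B : Type*} [Fintype A] [Fintype B] [DecidableEq A] [Nonempty A] [Nonempty B]
    (K : Matrix (A ⊕ B) (A ⊕ B) ℝ)
    (hK0 : ∀ i j, 0 ≤ K i j) (hK1 : ∀ i, ∑ j, K i j = 1)
    (KA : Matrix A A ℝ) (hKA : ∀ x y, KA x y = K (Sum.inl x) (Sum.inl y))
    (KAB : Matrix A B ℝ) (hKAB : ∀ x y, KAB x y = K (Sum.inl x) (Sum.inr y))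
    (hU : IsUnit (1 - KA))
    (π : A → ℝ) (hπ0 : ∀ x, 0 ≤ π x) (hπ1 : ∑ x, π x = 1)
    (Kπ : Matrix A A ℝ) (hKπ : ∀ x y, Kπ x y = KA x y + (∑ b, KAB x b) * π y)
    (Rπ : A → ℝ)
    (hRπ : Rπ = (∑ x, (π ᵥ* (1 - KA)⁻¹) x)⁻¹ • (π ᵥ* (1 - KA)⁻¹)) :
    Rπ ᵥ* Kπ = Rπ := by
  set v := π ᵥ* (1 - KA)⁻¹ with hv
  have hdet : IsUnit (1 - KA).det := (Matrix.isUnit_iff_isUnit_det _).mp hU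
  have hvK : v ᵥ* (1 - KA) = π := by
    rw [hv, Matrix.vecMul_vecMul, Matrix.nonsing_inv_mul _ hdet, Matrix.vecMul_one]
  have hvKA : v ᵥ* KA = v - π := by
    rw [Matrix.vecMul_sub, Matrix.vecMul_one] at hvK
    rw [← hvK, sub_sub_cancel]
  have hvKA' : ∀ y, ∑ x, v x * KA x y = v y - π y := by
    intro y
    have := congrFun hvKA y
    simpa [Matrix.vecMul, dotProduct] using this
  have hrow : ∀ x, (∑ b, KAB x b) = 1 - ∑ y, KA x y := by
    intro x
    have h := hK1 (Sum.inl x)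
    rw [Fintype.sum_sum_type] at h
    simp only [hKA, hKAB]
    linarith
  have hsum : ∑ x, v x * ∑ y, KA x y = (∑ y, v y) - 1 := by
    have : ∑ x, v x * ∑ y, KA x y = ∑ y, ∑ x, v x * KA x y := by
      rw [Finset.sum_comm]
      simp [Finset.mul_sum]
    rw [this]
    simp only [hvKA', Finset.sum_sub_distrib, hπ1]
  have hone : ∑ x, v x * (∑ b, KAB x b) = 1 := by
    simp only [hrow, mul_sub, mul_one, Finset.sum_sub_distrib, hsum]
    ring
  have key : v ᵥ* Kπ = v := by
    funext y
    have : ∑ x, v x * (KA x y + (∑ b, KAB x b) * π y)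
        = (∑ x, v x * KA x y) + (∑ x, v x * (∑ b, KAB x b)) * π y := by
      rw [Finset.sum_mul]
      rw [← Finset.sum_add_distrib]
      congr 1; funext x; ring
    simp only [Matrix.vecMul, dotProduct, hKπ]
    rw [this, hvKA' y, hone]
    ring
  rw [hRπ, Matrix.smul_vecMul, key]
end

section
/- (Hill relation) Let $K$ be a stochastic matrix on finite $E = A \cup B$ with $I - K_A$ invertible, $\pi$ a probability vector on $A$, and $R(\pi) = \pi(I-K_A)^{-1} / \pi(I-K_A)^{-1}\mathbf{1}_A$. Then for any function $f : A \to \mathbb{R}$, $\mathbb{E}_\pi\left[\sum_{n=0}^{T_B - 1} f(Y_n)\right] = \frac{R(\pi) f}{R(\pi) K_{AB} \mathbf{1}_B}$, where the left-hand side equals $\pi (I - K_A)^{-1} f$. In particular, taking $f = \mathbf{1}_A$: $\mathbb{E}_\pi[T_B] = 1 / \mathbb{P}_{R(\pi)}(Y_1 \in B)$. -/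
open Matrix BigOperators

/-- The Hill relation: `𝔼_π[∑_{n<T_B} f(Y_n)] = π(I-K_A)⁻¹ f = R(π)f / R(π)K_{AB}𝟙_B`,
and in particular `𝔼_π[T_B] = 1 / ℙ_{R(π)}(Y₁ ∈ B)`. -/
theorem stmt8 {A B : Type*} [Fintype A] [Fintype B] [DecidableEq A] [Nonempty A] [Nonempty B]
    (K : Matrix (A ⊕ B) (A ⊕ B) ℝ)
    (hK0 : ∀ i j, 0 ≤ K i j) (hK1 : ∀ i, ∑ j, K i j = 1)
    (KA : Matrix A A ℝ) (hKA : ∀ x y, KA x y = K (Sum.inl x) (Sum.inl y))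
    (KAB : Matrix A B ℝ) (hKAB : ∀ x y, KAB x y = K (Sum.inl x) (Sum.inr y))
    (hU : IsUnit (1 - KA))
    (π : A → ℝ) (hπ0 : ∀ x, 0 ≤ π x) (hπ1 : ∑ x, π x = 1)
    (Rπ : A → ℝ)
    (hRπ : Rπ = (∑ x, (π ᵥ* (1 - KA)⁻¹) x)⁻¹ • (π ᵥ* (1 - KA)⁻¹)) :
    (∀ f : A → ℝ,
      (π ᵥ* (1 - KA)⁻¹) ⬝ᵥ f = (Rπ ⬝ᵥ f) / (Rπ ⬝ᵥ fun x => ∑ b, KAB x b)) ∧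
    (π ᵥ* (1 - KA)⁻¹) ⬝ᵥ (fun _ => (1 : ℝ)) =
      1 / (Rπ ⬝ᵥ fun x => ∑ b, KAB x b) := by
  have hdet : IsUnit (1 - KA).det := (Matrix.isUnit_iff_isUnit_det _).mp hU
  set M := (1 - KA)⁻¹ with hM
  set v := π ᵥ* M with hv
  set u := M *ᵥ (fun _ => (1 : ℝ)) with hu
  -- basic facts about KA entries and row sums
  have hKA0 : ∀ x y, 0 ≤ KA x y := fun x y => (hKA x y) ▸ hK0 _ _
  have hrow : ∀ x, ∑ y, KA x y + ∑ b, KAB x b = 1 := by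
    intro x
    have := hK1 (Sum.inl x)
    rw [Fintype.sum_sum_type] at this
    simpa [hKA, hKAB] using this
  have hrow_le : ∀ x, ∑ y, KA x y ≤ 1 := by
    intro x
    have h0 : 0 ≤ ∑ b, KAB x b :=
      Finset.sum_nonneg fun b _ => (hKAB x b) ▸ hK0 _ _
    linarith [hrow x]
  have hrow_nn : ∀ x, 0 ≤ ∑ y, KA x y := fun x =>
    Finset.sum_nonneg fun y _ => hKA0 x y
  -- (1-KA) *ᵥ u = 1
  have hMu : (1 - KA) *ᵥ u = fun _ => (1 : ℝ) := by
    rw [hu, Matrix.mulVec_mulVec, Matrix.mul_nonsing_inv _ hdet, Matrix.one_mulVec]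
  -- u x = 1 + ∑ KA x y * u y
  have hurec : ∀ x, u x = 1 + ∑ y, KA x y * u y := by
    intro x
    have := congrFun hMu x
    rw [Matrix.sub_mulVec, Matrix.one_mulVec] at this
    have : u x - ∑ y, KA x y * u y = 1 := this
    linarith
  -- u ≥ 1 everywhere (minimum principle)
  have hu1 : ∀ x, (1 : ℝ) ≤ u x := by
    obtain ⟨x0, -, hx0⟩ := Finset.exists_min_image Finset.univ u ⟨Classical.arbitrary A, Finset.mem_univ _⟩
    have hmin : ∀ x, u x0 ≤ u x := fun x => hx0 x (Finset.mem_univ x)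
    have hc : ∑ y, KA x0 y * u y ≥ u x0 * ∑ y, KA x0 y := by
      rw [Finset.mul_sum]
      exact Finset.sum_le_sum fun y _ => by
        rw [mul_comm]
        exact mul_le_mul_of_nonneg_left (hmin y) (hKA0 x0 y)
    have h1 : (1 : ℝ) ≤ u x0 := by
      by_contra hlt
      push_neg at hlt
      nlinarith [hc, hurec x0, hrow_nn x0, hrow_le x0,
        mul_nonneg (by linarith : (0:ℝ) ≤ 1 - u x0)
          (by linarith [hrow_le x0] : (0:ℝ) ≤ 1 - ∑ y, KA x0 y)]
    exact fun x => le_trans h1 (hmin x)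
  -- s = ∑ v = π ⬝ᵥ u ≥ 1
  have hs_eq : ∑ x, v x = π ⬝ᵥ u := by
    rw [hu, Matrix.dotProduct_mulVec, ← hv]
    simp [dotProduct]
  have hs1 : (1 : ℝ) ≤ ∑ x, v x := by
    rw [hs_eq]
    calc (1 : ℝ) = ∑ x, π x := hπ1.symm
    _ ≤ ∑ x, π x * u x :=
      Finset.sum_le_sum fun x _ => by
        nlinarith [hπ0 x, hu1 x]
    _ = π ⬝ᵥ u := rfl
  set s := ∑ x, v x with hsdef
  have hs0 : s ≠ 0 := by positivity
  -- v ᵥ* (1 - KA) = π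
  have hvK : v ᵥ* (1 - KA) = π := by
    rw [hv, hM, Matrix.vecMul_vecMul, Matrix.nonsing_inv_mul _ hdet, Matrix.vecMul_one]
  -- denominator: v ⬝ᵥ (row sums of KAB) = 1
  have hg : (fun x => ∑ b, KAB x b) = (1 - KA) *ᵥ (fun _ => (1 : ℝ)) := by
    funext x
    rw [Matrix.sub_mulVec, Matrix.one_mulVec]
    have : ((KA *ᵥ fun _ => (1:ℝ))) x = ∑ y, KA x y := by
      simp [Matrix.mulVec, dotProduct]
    simp only [Pi.sub_apply, this]
    linarith [hrow x]
  have hvg : v ⬝ᵥ (fun x => ∑ b, KAB x b) = 1 := by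
    rw [hg, Matrix.dotProduct_mulVec, hvK]
    simpa [dotProduct] using hπ1
  have hRg : Rπ ⬝ᵥ (fun x => ∑ b, KAB x b) = s⁻¹ := by
    rw [hRπ, smul_dotProduct, hvg, smul_eq_mul, mul_one]
  constructor
  · intro f
    rw [hRg, hRπ, smul_dotProduct, smul_eq_mul]
    field_simp
  · rw [hRg, one_div, inv_inv, hsdef]
    simp [dotProduct]
end

section
/- Let $K$ be a stochastic matrix on finite $E = A \cup B$ with $I - K_A$ invertible, and define $R(\pi) = \pi(I - K_A)^{-1} / \pi(I-K_A)^{-1}\mathbf{1}_A$ for probability vectors $\pi$ on $A$. Then a probability vector $\pi$ is a quasi-stationary distribution for the killed process (i.e., $\pi K_A = \theta \pi$ for some $\theta \in [0,1)$) if and only if $R(\pi) = \pi$. -/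
open Matrix BigOperators

/-- A probability vector `π` on `A` is a quasi-stationary distribution for the killed
process (`π K_A = θ π` for some `θ ∈ [0,1)`) iff it is a fixed point of the return map
`R(π) = π(I - K_A)⁻¹ / π(I-K_A)⁻¹𝟙`. -/
theorem stmt9 {A B : Type*} [Fintype A] [Fintype B] [DecidableEq A] [Nonempty A] [Nonempty B]
    (K : Matrix (A ⊕ B) (A ⊕ B) ℝ)
    (hK0 : ∀ i j, 0 ≤ K i j) (hK1 : ∀ i, ∑ j, K i j = 1)
    (KA : Matrix A A ℝ) (hKA : ∀ x y, KA x y = K (Sum.inl x) (Sum.inl y))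
    (hU : IsUnit (1 - KA))
    (π : A → ℝ) (hπ0 : ∀ x, 0 ≤ π x) (hπ1 : ∑ x, π x = 1)
    (Rπ : A → ℝ)
    (hRπ : Rπ = (∑ x, (π ᵥ* (1 - KA)⁻¹) x)⁻¹ • (π ᵥ* (1 - KA)⁻¹)) :
    (∃ θ : ℝ, 0 ≤ θ ∧ θ < 1 ∧ π ᵥ* KA = θ • π) ↔ Rπ = π := by
  have hdet : IsUnit (1 - KA).det := (Matrix.isUnit_iff_isUnit_det _).mp hU
  have hmul : (1 - KA) * (1 - KA)⁻¹ = 1 := Matrix.mul_nonsing_inv _ hdet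
  have hmul' : (1 - KA)⁻¹ * (1 - KA) = 1 := Matrix.nonsing_inv_mul _ hdet
  obtain ⟨u, hu⟩ : ∃ u : A → ℝ, u = π ᵥ* (1 - KA)⁻¹ := ⟨_, rfl⟩
  obtain ⟨s, hs⟩ : ∃ s : ℝ, s = ∑ x, u x := ⟨_, rfl⟩
  rw [← hu] at hRπ
  rw [← hs] at hRπ
  have hπne : π ≠ 0 := by
    intro h
    rw [h] at hπ1
    simp at hπ1
  -- the key algebraic fact: u ᵥ* (1 - KA) = π
  have huK : u ᵥ* (1 - KA) = π := by
    rw [hu, Matrix.vecMul_vecMul, hmul', Matrix.vecMul_one]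
  constructor
  · rintro ⟨θ, hθ0, hθ1, hθ⟩
    have hθne : (1 - θ) ≠ 0 := by linarith
    have h1 : π ᵥ* (1 - KA) = (1 - θ) • π := by
      rw [Matrix.vecMul_sub, Matrix.vecMul_one, hθ]
      ext x; simp; ring
    have h2 : (1 - θ) • u = π := by
      have h := congrArg (fun v => v ᵥ* (1 - KA)⁻¹) h1
      simp only [Matrix.vecMul_vecMul, hmul, Matrix.vecMul_one, Matrix.smul_vecMul] at h
      rw [← hu] at h
      exact h.symm
    have h3 : u = (1 - θ)⁻¹ • π := by
      have h := congrArg (fun v => (1 - θ)⁻¹ • v) h2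
      simpa [smul_smul, inv_mul_cancel₀ hθne] using h
    have h4 : s = (1 - θ)⁻¹ := by
      rw [hs, h3]
      simp only [Pi.smul_apply, smul_eq_mul, ← Finset.mul_sum, hπ1, mul_one]
    rw [hRπ, h4, inv_inv, h3, smul_smul, mul_inv_cancel₀ hθne, one_smul]
  · intro hfix
    have hfix' : s⁻¹ • u = π := by rw [← hfix, hRπ]
    have hsne : s ≠ 0 := by
      intro h0
      rw [h0, _root_.inv_zero, zero_smul] at hfix'
      exact hπne hfix'.symm
    have hus : u = s • π := by
      rw [← hfix', smul_smul, mul_inv_cancel₀ hsne, one_smul]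
    have key : s • (π ᵥ* (1 - KA)) = π := by
      have h := congrArg (fun v => v ᵥ* (1 - KA)) hus
      simp only [Matrix.smul_vecMul] at h
      rw [huK] at h
      exact h.symm
    have h6 : π ᵥ* (1 - KA) = s⁻¹ • π := by
      have h := congrArg (fun v => s⁻¹ • v) key
      have h2 : π ᵥ* (1 - KA) = s⁻¹ • π := by simpa [smul_smul, inv_mul_cancel₀ hsne] using h
      exact h2
    have h7 : π ᵥ* KA = (1 - s⁻¹) • π := by
      rw [Matrix.vecMul_sub, Matrix.vecMul_one] at h6
      ext x
      have := congrFun h6 x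
      simp at this ⊢
      linarith
    refine ⟨1 - s⁻¹, ?_, ?_, h7⟩
    · obtain ⟨y, hy⟩ : ∃ y, 0 < π y := by
        by_contra h
        push_neg at h
        have : ∀ x, π x = 0 := fun x => le_antisymm (h x) (hπ0 x)
        exact hπne (funext this)
      have hval : (π ᵥ* KA) y = (1 - s⁻¹) * π y := by
        rw [h7]; simp
      have hnn : 0 ≤ (π ᵥ* KA) y := by
        rw [Matrix.vecMul, dotProduct]
        exact Finset.sum_nonneg fun x _ => mul_nonneg (hπ0 x) (by rw [hKA]; exact hK0 _ _)
      nlinarith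
    · have hrow : ∀ x : A, ∑ y, KA x y ≤ 1 := by
        intro x
        have h1 := hK1 (Sum.inl x)
        rw [Fintype.sum_sum_type] at h1
        have h2 : 0 ≤ ∑ b, K (Sum.inl x) (Sum.inr b) :=
          Finset.sum_nonneg fun b _ => hK0 _ _
        calc ∑ y, KA x y = ∑ y, K (Sum.inl x) (Sum.inl y) := by simp [hKA]
          _ ≤ 1 := by linarith
      have hsum : ∑ y, (π ᵥ* KA) y ≤ 1 := by
        have heq : ∑ y, (π ᵥ* KA) y = ∑ x, π x * ∑ y, KA x y := by
          simp only [Matrix.vecMul, dotProduct]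
          rw [Finset.sum_comm]
          simp [Finset.mul_sum]
        rw [heq, ← hπ1]
        exact Finset.sum_le_sum fun x _ => by
          calc π x * ∑ y, KA x y ≤ π x * 1 :=
                mul_le_mul_of_nonneg_left (hrow x) (hπ0 x)
            _ = π x := mul_one _
      have hsum2 : ∑ y, (π ᵥ* KA) y = 1 - s⁻¹ := by
        rw [h7]
        simp only [Pi.smul_apply, smul_eq_mul, ← Finset.mul_sum, hπ1, mul_one]
      have hinvne : s⁻¹ ≠ 0 := inv_ne_zero hsne
      have hle : 1 - s⁻¹ ≤ 1 := by rw [← hsum2]; exact hsum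
      cases lt_or_eq_of_le hle with
      | inl h => exact h
      | inr h => exact absurd (by linarith : s⁻¹ = 0) hinvne
end

section
/- Let $K$ be a stochastic matrix on finite $E = A \cup B$ with invariant probability $\pi_0$, $\pi_0(A) > 0$, $I - K_A$ invertible, and let $\nu_Q$ be a quasi-stationary distribution ($\nu_Q K_A = (1-p)\nu_Q$). Define $\nu_E = \frac{\pi_{0|A}(I - K_A)}{\pi_{0|A} K_{AB}\mathbf{1}_B}$, $H_Q = (I-K_A)^{-1}(I - \mathbf{1}_A \otimes \nu_Q)$, and $T^E_Q = \|\nu_E H_Q\|$ (total variation norm of the signed measure $\nu_E H_Q$, i.e., the $\ell^1$ norm of the row vector). Then $\|\pi_{0|A} - \nu_Q\| = (\pi_{0|A} K_{AB}\mathbf{1}_B) \cdot T^E_Q$. -/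
open Matrix BigOperators

/-- `‖π_{0|A} - ν_Q‖_{TV} = ℙ_{π_{0|A}}(Y₁ ∈ B) · T^E_Q`, where
`T^E_Q = ‖ν_E H_Q‖_{TV}` with `ν_E = π_{0|A}(I-K_A)/ℙ_{π_{0|A}}(Y₁ ∈ B)` and
`H_Q = (I-K_A)⁻¹(I - 𝟙_A ⊗ ν_Q)`. -/
theorem stmt11 {A B : Type*} [Fintype A] [Fintype B] [DecidableEq A] [Nonempty A] [Nonempty B]
    (K : Matrix (A ⊕ B) (A ⊕ B) ℝ)
    (hK0 : ∀ i j, 0 ≤ K i j) (hK1 : ∀ i, ∑ j, K i j = 1)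
    (π0 : A ⊕ B → ℝ) (hπnn : ∀ i, 0 ≤ π0 i) (hπ1 : ∑ i, π0 i = 1)
    (hstat : π0 ᵥ* K = π0)
    (hA : 0 < ∑ x : A, π0 (Sum.inl x))
    (KA : Matrix A A ℝ) (hKA : ∀ x y, KA x y = K (Sum.inl x) (Sum.inl y))
    (KAB : Matrix A B ℝ) (hKAB : ∀ x y, KAB x y = K (Sum.inl x) (Sum.inr y))
    (hU : IsUnit (1 - KA))
    (νQ : A → ℝ) (hν0 : ∀ x, 0 ≤ νQ x) (hν1 : ∑ x, νQ x = 1)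
    (p : ℝ) (heig : νQ ᵥ* KA = (1 - p) • νQ)
    (πc : A → ℝ) (hπc : πc = (∑ x : A, π0 (Sum.inl x))⁻¹ • fun x => π0 (Sum.inl x))
    (flux : ℝ) (hflux : flux = ∑ x, πc x * ∑ b, KAB x b) (hfluxpos : 0 < flux)
    (νE : A → ℝ) (hνE : νE = flux⁻¹ • (πc ᵥ* (1 - KA)))
    (HQ : Matrix A A ℝ)
    (hHQ : HQ = (1 - KA)⁻¹ * (1 - Matrix.of fun _ y => νQ y))
    (TEQ : ℝ) (hTEQ : TEQ = ∑ x, |(νE ᵥ* HQ) x|) :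
    ∑ x, |πc x - νQ x| = flux * TEQ := by
  have hdet : IsUnit (1 - KA).det := (Matrix.isUnit_iff_isUnit_det _).mp hU
  have hπcsum : ∑ x, πc x = 1 := by
    rw [hπc]
    simp only [Pi.smul_apply, smul_eq_mul]
    rw [← Finset.mul_sum, inv_mul_cancel₀ hA.ne']
  have key : νE ᵥ* HQ = flux⁻¹ • (πc - νQ) := by
    rw [hνE, hHQ, smul_vecMul, ← vecMul_vecMul,
      vecMul_vecMul πc (1 - KA) (1 - KA)⁻¹, Matrix.mul_nonsing_inv _ hdet, vecMul_one]
    congr 1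
    funext y
    simp only [vecMul, dotProduct, Matrix.sub_apply, Matrix.one_apply, Matrix.of_apply,
      Pi.sub_apply]
    rw [Finset.sum_congr rfl (fun x _ => mul_sub (πc x) _ _), Finset.sum_sub_distrib,
      ← Finset.sum_mul, hπcsum, one_mul]
    congr 1
    simp [Finset.sum_ite_eq' Finset.univ y πc, mul_comm]
  rw [hTEQ, key]
  have : ∀ x, |(flux⁻¹ • (πc - νQ)) x| = flux⁻¹ * |πc x - νQ x| := by
    intro x
    simp [abs_mul, abs_of_pos (inv_pos.mpr hfluxpos)]
  simp_rw [this, ← Finset.mul_sum, ← mul_assoc, mul_inv_cancel₀ hfluxpos.ne', one_mul]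
end

section
/- Under the setting of the previous statement, suppose additionally $p^+ := \max_{x \in A}(K_{AB}\mathbf{1}_B)(x)$ satisfies $p^+ T^E_Q < 1$. Then $\left|1 - \frac{\nu_Q K_{AB}\mathbf{1}_B}{\pi_{0|A} K_{AB}\mathbf{1}_B}\right| \leq p^+ T^E_Q$, and consequently $\left|1 - \frac{\pi_{0|A}K_{AB}\mathbf{1}_B}{\nu_Q K_{AB}\mathbf{1}_B}\right| \leq \frac{p^+ T^E_Q}{1 - p^+ T^E_Q}$. -/
open Matrix BigOperators

/-- Under the setting of the biasing-error lemma, if `p⁺ T^E_Q < 1` then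
`|1 - ν_Q K_{AB}𝟙_B / π_{0|A} K_{AB}𝟙_B| ≤ p⁺ T^E_Q` and
`|1 - π_{0|A} K_{AB}𝟙_B / ν_Q K_{AB}𝟙_B| ≤ p⁺ T^E_Q / (1 - p⁺ T^E_Q)`. -/
theorem stmt12 {A B : Type*} [Fintype A] [Fintype B] [DecidableEq A] [Nonempty A] [Nonempty B]
    (K : Matrix (A ⊕ B) (A ⊕ B) ℝ)
    (hK0 : ∀ i j, 0 ≤ K i j) (hK1 : ∀ i, ∑ j, K i j = 1)
    (π0 : A ⊕ B → ℝ) (hπnn : ∀ i, 0 ≤ π0 i) (hπ1 : ∑ i, π0 i = 1)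
    (hstat : π0 ᵥ* K = π0)
    (hA : 0 < ∑ x : A, π0 (Sum.inl x))
    (KA : Matrix A A ℝ) (hKA : ∀ x y, KA x y = K (Sum.inl x) (Sum.inl y))
    (KAB : Matrix A B ℝ) (hKAB : ∀ x y, KAB x y = K (Sum.inl x) (Sum.inr y))
    (hU : IsUnit (1 - KA))
    (νQ : A → ℝ) (hν0 : ∀ x, 0 ≤ νQ x) (hν1 : ∑ x, νQ x = 1)
    (p : ℝ) (heig : νQ ᵥ* KA = (1 - p) • νQ)
    (πc : A → ℝ) (hπc : πc = (∑ x : A, π0 (Sum.inl x))⁻¹ • fun x => π0 (Sum.inl x))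
    (flux : ℝ) (hflux : flux = ∑ x, πc x * ∑ b, KAB x b) (hfluxpos : 0 < flux)
    (νE : A → ℝ) (hνE : νE = flux⁻¹ • (πc ᵥ* (1 - KA)))
    (HQ : Matrix A A ℝ)
    (hHQ : HQ = (1 - KA)⁻¹ * (1 - Matrix.of fun _ y => νQ y))
    (TEQ : ℝ) (hTEQ : TEQ = ∑ x, |(νE ᵥ* HQ) x|)
    (pPlus : ℝ) (hpPlus : pPlus = ⨆ x : A, ∑ b, KAB x b)
    (hcond : pPlus * TEQ < 1) :
    |1 - (∑ x, νQ x * ∑ b, KAB x b) / flux| ≤ pPlus * TEQ ∧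
    |1 - flux / (∑ x, νQ x * ∑ b, KAB x b)| ≤
      pPlus * TEQ / (1 - pPlus * TEQ) := by

  classical
  set f : A → ℝ := fun x => ∑ b, KAB x b with hf
  have hf0 : ∀ x, 0 ≤ f x := fun x =>
    Finset.sum_nonneg fun b _ => by rw [hKAB]; exact hK0 _ _
  have hfp : ∀ x, f x ≤ pPlus := by
    intro x; rw [hpPlus]
    exact le_ciSup (Set.Finite.bddAbove (Set.finite_range _)) x
  have hp0 : 0 ≤ pPlus := le_trans (hf0 (Classical.arbitrary A)) (hfp _)
  have hT0 : 0 ≤ TEQ := by rw [hTEQ]; positivity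
  have hπcsum : ∑ x, πc x = 1 := by
    simp only [hπc, Pi.smul_apply, smul_eq_mul, ← Finset.mul_sum]
    exact inv_mul_cancel₀ hA.ne'
  have hdet : IsUnit (1 - KA).det := (Matrix.isUnit_iff_isUnit_det _).mp hU
  have hμ : νE ᵥ* HQ = flux⁻¹ • (fun x => πc x - νQ x) := by
    rw [hνE, hHQ, Matrix.smul_vecMul, Matrix.vecMul_vecMul, ← Matrix.mul_assoc,
      Matrix.mul_nonsing_inv _ hdet, Matrix.one_mul, Matrix.vecMul_sub, Matrix.vecMul_one]
    congr 1
    funext y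
    simp only [Pi.sub_apply, Matrix.vecMul, dotProduct, Matrix.of_apply]
    rw [← Finset.sum_mul, hπcsum, one_mul]
  set S : ℝ := ∑ x, νQ x * f x with hS
  have key : ∑ x, (νE ᵥ* HQ) x * f x = 1 - S / flux := by
    rw [hμ]
    simp only [Pi.smul_apply, smul_eq_mul, mul_assoc]
    rw [← Finset.mul_sum]
    have : ∑ x, (πc x - νQ x) * f x = flux - S := by
      rw [hflux, hS]
      simp [sub_mul, Finset.sum_sub_distrib]
      rfl
    rw [this, mul_sub, inv_mul_cancel₀ hfluxpos.ne', div_eq_inv_mul]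
  have hb : |1 - S / flux| ≤ pPlus * TEQ := by
    rw [← key]
    calc |∑ x, (νE ᵥ* HQ) x * f x| ≤ ∑ x, |(νE ᵥ* HQ) x * f x| :=
          Finset.abs_sum_le_sum_abs _ _
      _ = ∑ x, |(νE ᵥ* HQ) x| * f x := by
          simp only [abs_mul]
          exact Finset.sum_congr rfl fun x _ => by rw [abs_of_nonneg (hf0 x)]
      _ ≤ ∑ x, |(νE ᵥ* HQ) x| * pPlus :=
          Finset.sum_le_sum fun x _ => mul_le_mul_of_nonneg_left (hfp x) (abs_nonneg _)
      _ = TEQ * pPlus := by rw [hTEQ, Finset.sum_mul]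
      _ = pPlus * TEQ := mul_comm _ _
  refine ⟨hb, ?_⟩
  set t : ℝ := pPlus * TEQ with htdef
  have ht1 : t < 1 := hcond
  have hrle : 1 - t ≤ S / flux := by
    have := abs_le.mp hb
    linarith [this.2]
  have hSge : (1 - t) * flux ≤ S := by
    rwa [← le_div_iff₀ hfluxpos]
  have hSpos : 0 < S :=
    lt_of_lt_of_le (by nlinarith) hSge
  have habs : |flux - S| ≤ t * flux := by
    have h1 : |1 - S / flux| = |flux - S| / flux := by
      rw [show (1 : ℝ) - S / flux = (flux - S) / flux by field_simp, abs_div,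
        abs_of_pos hfluxpos]
    rw [h1, div_le_iff₀ hfluxpos] at hb
    linarith [hb]
  have h2 : |1 - flux / S| = |flux - S| / S := by
    rw [abs_sub_comm flux S]
    rw [show (1 : ℝ) - flux / S = (S - flux) / S by field_simp]
    rw [abs_div, abs_of_pos hSpos]
  rw [h2, div_le_div_iff₀ hSpos (by linarith)]
  nlinarith [abs_nonneg (flux - S), mul_nonneg hp0 hT0]
end

section
/- Let $M$ and $m$ be positive reals with $M/m \leq e^\Delta$ for some $\Delta > 0$. Define $\varphi(y) = \frac{y}{m+y} - \frac{y}{M+y}$ for $y \geq 0$. Then $\sup_{y \geq 0} \varphi(y) = \frac{\sqrt{M} - \sqrt{m}}{\sqrt{M} + \sqrt{m}} \leq \tanh(\Delta/4)$. -/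
/-- For `0 < m ≤ M` with `M/m ≤ e^Δ`, the function
`φ(y) = y/(m+y) - y/(M+y)` attains its supremum over `[0,∞)` at `y = √(mM)`, with
`sup φ = (√M - √m)/(√M + √m) ≤ tanh(Δ/4)`. -/
theorem stmt17 (m M Δ : ℝ) (hm : 0 < m) (hM : 0 < M) (hmM : m ≤ M)
    (hΔ : 0 < Δ) (hR : M / m ≤ Real.exp Δ)
    (φ : ℝ → ℝ) (hφ : ∀ y, φ y = y / (m + y) - y / (M + y)) :
    (∀ y, 0 ≤ y → φ y ≤ (Real.sqrt M - Real.sqrt m) / (Real.sqrt M + Real.sqrt m)) ∧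
    φ (Real.sqrt (m * M)) =
      (Real.sqrt M - Real.sqrt m) / (Real.sqrt M + Real.sqrt m) ∧
    (Real.sqrt M - Real.sqrt m) / (Real.sqrt M + Real.sqrt m) ≤ Real.tanh (Δ / 4) := by
  set s := Real.sqrt m with hsdef
  set t := Real.sqrt M with htdef
  have hs : 0 < s := Real.sqrt_pos.2 hm
  have ht : 0 < t := Real.sqrt_pos.2 hM
  have hs2 : s ^ 2 = m := Real.sq_sqrt hm.le
  have ht2 : t ^ 2 = M := Real.sq_sqrt hM.le
  have hst : s ≤ t := Real.sqrt_le_sqrt hmM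
  refine ⟨?_, ?_, ?_⟩
  · intro y hy
    rw [hφ]
    have h1 : 0 < m + y := by linarith
    have h2 : 0 < M + y := by linarith
    have h3 : 0 < t + s := by linarith
    rw [← hs2] at h1 ⊢; rw [← ht2] at h2 ⊢
    rw [div_sub_div _ _ h1.ne' h2.ne', div_le_div_iff₀ (by positivity) h3]
    nlinarith [mul_nonneg (sub_nonneg.2 hst) (sq_nonneg (y - s * t)), sq_nonneg (y - s*t)]
  · have hmm : Real.sqrt (m * M) = s * t := Real.sqrt_mul hm.le M
    rw [hφ, hmm, ← hs2, ← ht2]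
    have h1 : s ^ 2 + s * t = s * (s + t) := by ring
    have h2 : t ^ 2 + s * t = t * (t + s) := by ring
    field_simp
    ring
  · have a := Real.exp (Δ / 4)
    set a := Real.exp (Δ / 4) with hadef
    have ha : 0 < a := Real.exp_pos _
    have hea : Real.exp Δ = a ^ 4 := by
      rw [hadef, ← Real.exp_nat_mul]; ring
    have hMm : M ≤ m * a ^ 4 := by
      rw [← hea]; calc M = (M / m) * m := by field_simp
        _ ≤ Real.exp Δ * m := by nlinarith
        _ = m * Real.exp Δ := by ring
    have hts : t ≤ a ^ 2 * s := by
      have h : t ^ 2 ≤ (a ^ 2 * s) ^ 2 := by nlinarith [hs2, ht2]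
      nlinarith [sq_nonneg (t - a^2*s), sq_nonneg (t + a^2*s), mul_pos (mul_pos ha ha) hs, h]
    have htanh : Real.tanh (Δ / 4) = (a - 1/a) / (a + 1/a) := by
      rw [Real.tanh_eq_sinh_div_cosh, Real.sinh_eq, Real.cosh_eq, Real.exp_neg, ← hadef]
      field_simp
    rw [htanh]
    have h3 : 0 < t + s := by linarith
    have h4 : 0 < a + 1/a := by positivity
    rw [div_le_div_iff₀ h3 h4]
    have hb : 0 < 1/a := by positivity
    have h6 : t * (1/a) ≤ s * a := by
      calc t * (1/a) ≤ a ^ 2 * s * (1/a) := by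
            exact mul_le_mul_of_nonneg_right hts hb.le
        _ = s * a := by field_simp
    nlinarith [h6]
end

section
/- (Birkhoff contraction under the two-sided condition, finite setting) Let $K$ be an $n \times n$ matrix with entries satisfying $s_x \pi_y \leq K_{xy} \leq R\, s_x \pi_y$ for all $x,y$, where $s \in \mathbb{R}^n_{>0}$, $\pi$ a strictly positive probability vector, and $R \geq 1$. Then for all strictly positive vectors $\lambda, \nu \in \mathbb{R}^n_{>0}$: $\Theta(\lambda K, \nu K) \leq 2 \ln R$, where $\Theta(\lambda,\nu) = \ln\left(\max_i(\nu_i/\lambda_i) / \min_i(\nu_i/\lambda_i)\right)$ is the Hilbert projective metric and $\lambda K$ denotes the row vector $(\sum_x \lambda_x K_{xy})_y$. -/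
open Matrix BigOperators

/-- The Hilbert projective metric on positive vectors:
`Θ(λ,ν) = log(max_i(ν_i/λ_i) / min_i(ν_i/λ_i))`. -/
noncomputable def hilbertTheta {n : ℕ} (l v : Fin n → ℝ) : ℝ :=
  Real.log ((⨆ i, v i / l i) / (⨅ i, v i / l i))

/-- Birkhoff contraction under the two-sided condition: if
`s_x π_y ≤ K_{xy} ≤ R s_x π_y` for all `x, y`, with `s, π > 0`, `π` a probability
vector and `R ≥ 1`, then `Θ(λK, νK) ≤ 2 log R` for all strictly positive `λ, ν`. -/
theorem stmt19 {n : ℕ} (hn : 0 < n) (K : Matrix (Fin n) (Fin n) ℝ)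
    (s π : Fin n → ℝ) (hs : ∀ x, 0 < s x) (hπ : ∀ x, 0 < π x) (hπ1 : ∑ x, π x = 1)
    (R : ℝ) (hR : 1 ≤ R)
    (hlow : ∀ x y, s x * π y ≤ K x y) (hup : ∀ x y, K x y ≤ R * s x * π y)
    (l v : Fin n → ℝ) (hl : ∀ i, 0 < l i) (hv : ∀ i, 0 < v i) :
    hilbertTheta (l ᵥ* K) (v ᵥ* K) ≤ 2 * Real.log R := by
  haveI : Nonempty (Fin n) := Fin.pos_iff_nonempty.mp hn
  have hR0 : (0:ℝ) < R := lt_of_lt_of_le one_pos hR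
  set A : ℝ := ∑ x, l x * s x with hA
  set B : ℝ := ∑ x, v x * s x with hB
  have hA0 : 0 < A := Finset.sum_pos (fun x _ => mul_pos (hl x) (hs x)) Finset.univ_nonempty
  have hB0 : 0 < B := Finset.sum_pos (fun x _ => mul_pos (hv x) (hs x)) Finset.univ_nonempty
  have hlK : ∀ y, (l ᵥ* K) y = ∑ x, l x * K x y := fun y => rfl
  -- bounds on lK and vK
  have hlKlow : ∀ y, A * π y ≤ (l ᵥ* K) y := by
    intro y
    rw [hlK, hA, Finset.sum_mul]
    refine Finset.sum_le_sum fun x _ => ?_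
    rw [mul_assoc]
    exact mul_le_mul_of_nonneg_left (hlow x y) (hl x).le
  have hlKup : ∀ y, (l ᵥ* K) y ≤ R * A * π y := by
    intro y
    rw [hlK]
    have : R * A * π y = ∑ x, l x * (R * s x * π y) := by
      rw [hA, Finset.mul_sum, Finset.sum_mul]
      exact Finset.sum_congr rfl fun x _ => by ring
    rw [this]
    exact Finset.sum_le_sum fun x _ => mul_le_mul_of_nonneg_left (hup x y) (hl x).le
  have hvKlow : ∀ y, B * π y ≤ (v ᵥ* K) y := by
    intro y
    show B * π y ≤ ∑ x, v x * K x y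
    rw [hB, Finset.sum_mul]
    refine Finset.sum_le_sum fun x _ => ?_
    rw [mul_assoc]
    exact mul_le_mul_of_nonneg_left (hlow x y) (hv x).le
  have hvKup : ∀ y, (v ᵥ* K) y ≤ R * B * π y := by
    intro y
    show (∑ x, v x * K x y) ≤ R * B * π y
    have : R * B * π y = ∑ x, v x * (R * s x * π y) := by
      rw [hB, Finset.mul_sum, Finset.sum_mul]
      exact Finset.sum_congr rfl fun x _ => by ring
    rw [this]
    exact Finset.sum_le_sum fun x _ => mul_le_mul_of_nonneg_left (hup x y) (hv x).le
  have hlK0 : ∀ y, 0 < (l ᵥ* K) y := fun y =>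
    lt_of_lt_of_le (mul_pos hA0 (hπ y)) (hlKlow y)
  have hvK0 : ∀ y, 0 < (v ᵥ* K) y := fun y =>
    lt_of_lt_of_le (mul_pos hB0 (hπ y)) (hvKlow y)
  set r : Fin n → ℝ := fun y => (v ᵥ* K) y / (l ᵥ* K) y with hr
  have hrup : ∀ y, r y ≤ R * B / A := by
    intro y
    have h1 : (v ᵥ* K) y ≤ R * B * π y := hvKup y
    have h2 : A * π y ≤ (l ᵥ* K) y := hlKlow y
    have := div_le_div₀ (mul_pos (mul_pos hR0 hB0) (hπ y)).le h1 (mul_pos hA0 (hπ y)) h2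
    calc r y ≤ R * B * π y / (A * π y) := this
      _ = R * B / A := mul_div_mul_right _ _ (hπ y).ne'
  have hrlow : ∀ y, B / (R * A) ≤ r y := by
    intro y
    have h1 : B * π y ≤ (v ᵥ* K) y := hvKlow y
    have h2 : (l ᵥ* K) y ≤ R * A * π y := hlKup y
    have := div_le_div₀ (hvK0 y).le h1 (hlK0 y) h2
    calc B / (R * A) = B * π y / (R * A * π y) := (mul_div_mul_right _ _ (hπ y).ne').symm
      _ ≤ r y := this
  have hsup : (⨆ i, r i) ≤ R * B / A := ciSup_le hrup
  have hinf : B / (R * A) ≤ ⨅ i, r i := le_ciInf hrlow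
  have hinf0 : 0 < ⨅ i, r i := lt_of_lt_of_le (div_pos hB0 (mul_pos hR0 hA0)) hinf
  have hsup0 : 0 < ⨆ i, r i := by
    refine lt_of_lt_of_le hinf0 ?_
    exact le_trans (ciInf_le (Set.Finite.bddBelow (Set.finite_range r)) (Classical.arbitrary _))
      (le_ciSup (Set.Finite.bddAbove (Set.finite_range r)) _)
  have hratio : (⨆ i, r i) / (⨅ i, r i) ≤ R ^ 2 := by
    have hAne : A ≠ 0 := hA0.ne'
    have hBne : B ≠ 0 := hB0.ne'
    have hRne : R ≠ 0 := hR0.ne'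
    calc (⨆ i, r i) / (⨅ i, r i) ≤ (R * B / A) / (B / (R * A)) :=
          div_le_div₀ (div_pos (mul_pos hR0 hB0) hA0).le hsup (div_pos hB0 (mul_pos hR0 hA0)) hinf
      _ = R ^ 2 := by field_simp
  have : hilbertTheta (l ᵥ* K) (v ᵥ* K) = Real.log ((⨆ i, r i) / (⨅ i, r i)) := rfl
  rw [this]
  calc Real.log ((⨆ i, r i) / (⨅ i, r i)) ≤ Real.log (R ^ 2) :=
        Real.log_le_log (by positivity) hratio
    _ = 2 * Real.log R := by rw [Real.log_pow]; push_cast; ring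
end
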